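/- Derivative formula for corrugations: With p = (π, v) a dual pair on E and γ : E × S¹ → F a smooth family of loops, the corrugation corr_N(γ)(x) = (1/N)∫₀^{Nπ(x)}(γ_x(s) − avg(γ_x)) ds is smooth in x and its derivative satisfies D(corr_N(γ))(x) = π ⊗ (γ_x(Nπ(x)) − avg(γ_x)) + R_N(x), where π ⊗ w denotes the rank-one map u ↦ π(u)·w and the remainder R_N(x) = (1/N)∫₀^{Nπ(x)}(∂_x γ_x(s) − ∂_x avg(γ)(x)) ds tends to 0 uniformly on compact sets as N → ∞. -/

import Mathlib

set_option synthInstance.maxHeartbeats 1000000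
set_option maxHeartbeats 1000000

open scoped ContDiff
open MeasureTheory Metric intervalIntegral

section aux

variable {H : Type*} [NormedAddCommGroup H] [NormedSpace ℝ H]
  {G : Type*} [NormedAddCommGroup G] [NormedSpace ℝ G]

/-- partial derivative of a smooth binary function. -/
lemma my_hasFDerivAt_partial {f : H → ℝ → G} (hf : ContDiff ℝ ∞ ↿f) (x : H) (s : ℝ) :
    HasFDerivAt (fun y ↦ f y s)
      ((fderiv ℝ ↿f (x, s)).comp ((ContinuousLinearMap.id ℝ H).prod 0)) x := by
  have h1 : HasFDerivAt ↿f (fderiv ℝ ↿f (x, s)) (x, s) :=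
    (hf.differentiable (by simp) (x, s)).hasFDerivAt
  have h2 : HasFDerivAt (fun y : H ↦ (y, s))
      ((ContinuousLinearMap.id ℝ H).prod 0) x :=
    (hasFDerivAt_id x).prodMk (hasFDerivAt_const s x)
  exact h1.comp x h2

lemma my_cont_partial {f : H → ℝ → G} (hf : ContDiff ℝ ∞ ↿f) :
    Continuous fun p : H × ℝ ↦ fderiv ℝ (fun y ↦ f y p.2) p.1 := by
  have h8 : (∞ : WithTop ℕ∞) + 1 ≤ ∞ := by
    norm_num
  have h1 : Continuous fun p : H × ℝ ↦ fderiv ℝ ↿f p :=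
    (hf.fderiv_right h8).continuous
  have h2 : Continuous fun p : H × ℝ ↦
      (fderiv ℝ ↿f p).comp ((ContinuousLinearMap.id ℝ H).prod 0) := by
    exact (((ContinuousLinearMap.compL ℝ H (H × ℝ) G).flip
      ((ContinuousLinearMap.id ℝ H).prod 0)).continuous).comp h1
  refine h2.congr fun p ↦ ?_
  exact ((my_hasFDerivAt_partial hf p.1 p.2).fderiv).symm

/-- Differentiation under the integral sign for a fixed interval. -/
lemma my_key1 [FiniteDimensional ℝ H] [CompleteSpace G]
    {f : H → ℝ → G} (hf : ContDiff ℝ ∞ ↿f) (a b : ℝ) (x₀ : H) :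
    HasFDerivAt (fun x ↦ ∫ t in a..b, f x t)
      (∫ t in a..b, fderiv ℝ (fun y ↦ f y t) x₀) x₀ := by
  set c : H →L[ℝ] H × ℝ := (ContinuousLinearMap.id ℝ H).prod 0 with hc
  set F' : H → ℝ → (H →L[ℝ] G) := fun x t ↦ (fderiv ℝ ↿f (x, t)).comp c with hF'
  have hFcont : Continuous fun p : H × ℝ ↦ fderiv ℝ ↿f p := by
    have h8 : (∞ : WithTop ℕ∞) + 1 ≤ ∞ := by norm_num
    exact (hf.fderiv_right h8).continuous
  have hF'cont : Continuous ↿F' :=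
    (((ContinuousLinearMap.compL ℝ H (H × ℝ) G).flip c).continuous).comp hFcont
  -- bound on a compact set
  obtain ⟨C, hC⟩ := ((isCompact_closedBall x₀ 1).prod isCompact_uIcc).exists_bound_of_continuousOn
    (hF'cont.continuousOn)
  have key := intervalIntegral.hasFDerivAt_integral_of_dominated_of_fderiv_le
    (𝕜 := ℝ) (μ := volume) (F := fun x t ↦ f x t) (F' := F') (x₀ := x₀)
    (bound := fun _ ↦ C) (a := a) (b := b) (s := ball x₀ 1) (ball_mem_nhds x₀ one_pos)
    ?_ ?_ ?_ ?_ ?_ ?_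
  · refine key.congr_fderiv ?_
    refine intervalIntegral.integral_congr fun t _ ↦ ?_
    exact ((my_hasFDerivAt_partial hf x₀ t).fderiv).symm
  · exact Filter.Eventually.of_forall fun x ↦
      ((hf.continuous.comp (Continuous.prodMk_right x)).aestronglyMeasurable)
  · exact ((hf.continuous.comp (Continuous.prodMk_right x₀))).intervalIntegrable a b
  · exact (hF'cont.comp (Continuous.prodMk_right x₀)).aestronglyMeasurable
  · refine Filter.Eventually.of_forall fun t ht x hx ↦ ?_
    exact hC (x, t) ⟨ball_subset_closedBall hx, Set.uIoc_subset_uIcc ht⟩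
  · exact intervalIntegrable_const
  · exact Filter.Eventually.of_forall fun t _ x _ ↦ my_hasFDerivAt_partial hf x t
end aux

universe u

/-- smoothness of parametric integrals over a fixed interval, same-universe version -/
lemma my_key2aux (n : ℕ) : ∀ {H : Type u} [NormedAddCommGroup H] [NormedSpace ℝ H]
    [FiniteDimensional ℝ H] {G : Type u} [NormedAddCommGroup G] [NormedSpace ℝ G]
    [FiniteDimensional ℝ G] (f : H → ℝ → G) (a b : ℝ), ContDiff ℝ ∞ ↿f →
    ContDiff ℝ n fun x ↦ ∫ t in a..b, f x t := by
  induction n with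
  | zero =>
    intro H _ _ _ G _ _ _ f a b hf
    rw [show ((0 : ℕ) : WithTop ℕ∞) = 0 from rfl, contDiff_zero]
    exact intervalIntegral.continuous_parametric_intervalIntegral_of_continuous'
      hf.continuous a b
  | succ n ih =>
    intro H _ _ _ G _ _ _ f a b hf
    rw [show ((n + 1 : ℕ) : WithTop ℕ∞) = (n : WithTop ℕ∞) + 1 from by push_cast; ring,
      contDiff_succ_iff_fderiv]
    refine ⟨fun x ↦ (my_key1 hf a b x).differentiableAt, by simp, ?_⟩
    set c : H →L[ℝ] H × ℝ := (ContinuousLinearMap.id ℝ H).prod 0 with hc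
    have hg : ContDiff ℝ ∞ ↿(fun x t ↦ (fderiv ℝ ↿f (x, t)).comp c) := by
      have h8 : (∞ : WithTop ℕ∞) + 1 ≤ ∞ := by norm_num
      exact (((ContinuousLinearMap.compL ℝ H (H × ℝ) G).flip c).contDiff).comp
        (hf.fderiv_right h8)
    have h2 := ih (fun x t ↦ (fderiv ℝ ↿f (x, t)).comp c) a b hg
    have heq : (fderiv ℝ fun x ↦ ∫ t in a..b, f x t)
        = fun x ↦ ∫ t in a..b, (fderiv ℝ ↿f (x, t)).comp c := by
      funext x
      rw [(my_key1 hf a b x).fderiv]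
      exact intervalIntegral.integral_congr fun t _ ↦ ((my_hasFDerivAt_partial hf x t).fderiv)
    rw [heq]
    exact h2

section wrap

variable {E : Type*} [NormedAddCommGroup E] [NormedSpace ℝ E] [FiniteDimensional ℝ E]
  {F : Type*} [NormedAddCommGroup F] [NormedSpace ℝ F] [FiniteDimensional ℝ F]

/-- smoothness of parametric integrals over a fixed interval -/
lemma my_key2 {f : E → ℝ → F} (hf : ContDiff ℝ ∞ ↿f) (a b : ℝ) :
    ContDiff ℝ ∞ fun x ↦ ∫ t in a..b, f x t := by
  set eE := toEuclidean (E := E) with heE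
  set eF := toEuclidean (E := F) with heF
  set f₀ : EuclideanSpace ℝ (Fin (Module.finrank ℝ E)) → ℝ →
      EuclideanSpace ℝ (Fin (Module.finrank ℝ F)) := fun y t ↦ eF (f (eE.symm y) t) with hf₀
  have hf₀s : ContDiff ℝ ∞ ↿f₀ :=
    eF.contDiff.comp (hf.comp
      ((eE.symm.contDiff.comp contDiff_fst).prodMk contDiff_snd))
  have heq : (fun x ↦ ∫ t in a..b, f x t)
      = fun x ↦ eF.symm (∫ t in a..b, f₀ (eE x) t) := by
    funext x
    have hint : IntervalIntegrable (f x) volume a b :=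
      (hf.continuous.comp (Continuous.prodMk_right x)).intervalIntegrable a b
    have : (∫ t in a..b, f₀ (eE x) t) = eF (∫ t in a..b, f x t) := by
      simp only [hf₀, eE.symm_apply_apply]
      simpa using eF.toContinuousLinearMap.intervalIntegral_comp_comm hint
    rw [this, eF.symm_apply_apply]
  rw [heq]
  refine contDiff_infty.2 fun n ↦ ?_
  exact eF.symm.contDiff.comp ((my_key2aux n f₀ a b hf₀s).comp eE.contDiff)

/-- smoothness of the parametric primitive (variable upper endpoint) -/
lemma my_key3 {f : E → ℝ → F} (hf : ContDiff ℝ ∞ ↿f) :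
    ContDiff ℝ ∞ fun p : E × ℝ ↦ ∫ s in (0:ℝ)..p.2, f p.1 s := by
  have hscal : ∀ p : E × ℝ, (∫ s in (0:ℝ)..p.2, f p.1 s)
      = p.2 • ∫ u in (0:ℝ)..1, f p.1 (p.2 * u) := by
    intro p
    rw [intervalIntegral.smul_integral_comp_mul_left (fun s ↦ f p.1 s) p.2, mul_zero, mul_one]
  have h1 : ContDiff ℝ ∞ fun p : E × ℝ ↦ ∫ u in (0:ℝ)..1, f p.1 (p.2 * u) := by
    refine my_key2 (f := fun (p : E × ℝ) u ↦ f p.1 (p.2 * u)) ?_ 0 1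
    exact hf.comp ((contDiff_fst.comp contDiff_fst).prodMk
      ((contDiff_snd.comp contDiff_fst).mul contDiff_snd))
  have h2 : ContDiff ℝ ∞ fun p : E × ℝ ↦ p.2 • ∫ u in (0:ℝ)..1, f p.1 (p.2 * u) :=
    contDiff_snd.smul h1
  have heq : (fun p : E × ℝ ↦ ∫ s in (0:ℝ)..p.2, f p.1 s)
      = fun p : E × ℝ ↦ p.2 • ∫ u in (0:ℝ)..1, f p.1 (p.2 * u) := funext hscal
  rw [heq]
  exact h2

end wrap

/-- Derivative formula for corrugations: the corrugation
`corr N x = (1/N) ∫₀^{N π x} (γ x s - avg (γ x)) ds` is smooth in `x`, its derivative is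
`π ⊗ (γ x (N π x) - avg (γ x)) + R N x` where the remainder
`R N x = (1/N) ∫₀^{N π x} (∂ₓ γ (·, s) - ∂ₓ avg γ) (x) ds`
tends to `0` uniformly on compact sets as `N → ∞`. -/
theorem corrugation_fderiv {E F : Type*}
    [NormedAddCommGroup E] [NormedSpace ℝ E] [FiniteDimensional ℝ E]
    [NormedAddCommGroup F] [NormedSpace ℝ F] [FiniteDimensional ℝ F]
    (π : E →L[ℝ] ℝ) (v : E) (hv : π v = 1)
    {γ : E → ℝ → F} (hγ : ContDiff ℝ ∞ ↿γ)
    (hper : ∀ x, Function.Periodic (γ x) 1)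
    (corr : ℝ → E → F)
    (hcorr : ∀ N x, corr N x =
      (N⁻¹ : ℝ) • ∫ s in (0 : ℝ)..(N * π x), (γ x s - ∫ u in (0 : ℝ)..1, γ x u))
    (R : ℝ → E → E →L[ℝ] F)
    (hR : ∀ N x, R N x = (N⁻¹ : ℝ) • ∫ s in (0 : ℝ)..(N * π x),
      (fderiv ℝ (fun y ↦ γ y s) x - fderiv ℝ (fun y ↦ ∫ u in (0 : ℝ)..1, γ y u) x)) :
    (∀ N, ContDiff ℝ ∞ (corr N)) ∧
    (∀ N, N ≠ 0 → ∀ x : E, HasFDerivAt (corr N)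
      (π.smulRight (γ x (N * π x) - ∫ u in (0 : ℝ)..1, γ x u) + R N x) x) ∧
    ∀ K : Set E, IsCompact K → ∀ ε > (0 : ℝ),
      ∃ N₀ : ℝ, ∀ N ≥ N₀, ∀ x ∈ K, ‖R N x‖ ≤ ε := by
  classical
  set A : E → F := fun y ↦ ∫ u in (0:ℝ)..1, γ y u with hA
  have hAs : ContDiff ℝ ∞ A := my_key2 hγ 0 1
  set g : E → ℝ → F := fun y s ↦ γ y s - A y with hg
  have hgs : ContDiff ℝ ∞ ↿g := hγ.sub (hAs.comp contDiff_fst)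
  set Φ : E × ℝ → F := fun p ↦ ∫ s in (0:ℝ)..p.2, g p.1 s with hΦ
  have hΦs : ContDiff ℝ ∞ Φ := my_key3 hgs
  have hcorr' : ∀ N, corr N = fun x ↦ (N⁻¹ : ℝ) • Φ (x, N * π x) := by
    intro N; funext x; rw [hcorr]
  have hγslice : ∀ s : ℝ, ContDiff ℝ ∞ fun y ↦ γ y s := fun s ↦
    hγ.comp (contDiff_id.prodMk contDiff_const)
  have hdiffA : Differentiable ℝ A := hAs.differentiable (by simp)
  have hgslice_fderiv : ∀ (x : E) (s : ℝ), fderiv ℝ (fun y ↦ g y s) x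
      = fderiv ℝ (fun y ↦ γ y s) x - fderiv ℝ A x := fun x s ↦
    fderiv_sub (((hγslice s).differentiable (by simp)) x) (hdiffA x)
  refine ⟨?_, ?_, ?_⟩
  · intro N
    rw [hcorr' N]
    exact (hΦs.comp (contDiff_id.prodMk (contDiff_const.mul π.contDiff))).const_smul _
  · intro N hN x
    have hcontg : Continuous ↿g := hgs.continuous
    have hgxcont : Continuous (g x) := hcontg.comp (Continuous.prodMk_right x)
    set T : ℝ := N * π x with hT
    have hderivt : HasDerivAt (fun t ↦ Φ (x, t)) (g x T) T :=
      intervalIntegral.integral_hasDerivAt_right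
        (hgxcont.intervalIntegrable 0 T)
        (hgxcont.stronglyMeasurableAtFilter volume (nhds T))
        hgxcont.continuousAt
    have hΦhas : HasFDerivAt Φ (fderiv ℝ Φ (x, T)) (x, T) :=
      ((hΦs.differentiable (by simp)) (x, T)).hasFDerivAt
    set D := fderiv ℝ Φ (x, T) with hD
    set Acl : E →L[ℝ] F := ∫ s in (0:ℝ)..T, fderiv ℝ (fun y ↦ g y s) x with hAcl
    have hDl : D.comp ((ContinuousLinearMap.id ℝ E).prod 0) = Acl := by
      have h1 : HasFDerivAt (fun y ↦ Φ (y, T))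
          (D.comp ((ContinuousLinearMap.id ℝ E).prod 0)) x :=
        by have := hΦhas.comp x ((hasFDerivAt_id (𝕜 := ℝ) x).prodMk (hasFDerivAt_const T x) :
          HasFDerivAt (fun y : E ↦ (y, T)) ((ContinuousLinearMap.id ℝ E).prod 0) x); exact this
      exact h1.unique (my_key1 hgs 0 T x)
    have hDr : D.comp ((0 : ℝ →L[ℝ] E).prod (ContinuousLinearMap.id ℝ ℝ))
        = ContinuousLinearMap.smulRight (1 : ℝ →L[ℝ] ℝ) (g x T) := by
      have h1 : HasFDerivAt (fun t ↦ Φ (x, t))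
          (D.comp ((0 : ℝ →L[ℝ] E).prod (ContinuousLinearMap.id ℝ ℝ))) T :=
        hΦhas.comp T ((hasFDerivAt_const x T).prodMk (hasFDerivAt_id T))
      exact h1.unique (hasDerivAt_iff_hasFDerivAt.1 hderivt)
    have hsplit : ∀ (u : E) (τ : ℝ), D (u, τ) = Acl u + τ • g x T := by
      intro u τ
      have heq : ((u, τ) : E × ℝ) = ((u, 0) : E × ℝ) + ((0, τ) : E × ℝ) := by simp
      have h1 : D (u, (0:ℝ)) = Acl u := by
        rw [← hDl]; rfl
      have h2 : D ((0:E), τ) = τ • g x T := by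
        have h3 := ContinuousLinearMap.ext_iff.1 hDr τ
        simpa using h3
      rw [heq, map_add, h1, h2]
    have hπd : HasFDerivAt (fun y ↦ N * π y) ((N : ℝ) • (π : E →L[ℝ] ℝ)) x := by
      have := (π.hasFDerivAt (x := x)).const_smul N; exact this
    have hinner : HasFDerivAt (fun y : E ↦ (y, N * π y))
        ((ContinuousLinearMap.id ℝ E).prod ((N : ℝ) • (π : E →L[ℝ] ℝ))) x :=
      (hasFDerivAt_id x).prodMk hπd
    have hcomp : HasFDerivAt (fun y ↦ (N⁻¹ : ℝ) • Φ (y, N * π y))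
        ((N⁻¹ : ℝ) • (D.comp ((ContinuousLinearMap.id ℝ E).prod ((N : ℝ) • (π : E →L[ℝ] ℝ))))) x :=
      (hΦhas.comp x hinner).const_smul N⁻¹
    rw [hcorr' N]
    refine hcomp.congr_fderiv ?_
    have hRA : R N x = (N⁻¹ : ℝ) • Acl := by
      rw [hR, hAcl]
      congr 1
      exact intervalIntegral.integral_congr fun s _ ↦ (hgslice_fderiv x s).symm
    ext u
    have hval : ((N⁻¹ : ℝ) • (D.comp ((ContinuousLinearMap.id ℝ E).prod
        ((N : ℝ) • (π : E →L[ℝ] ℝ))))) u = (N⁻¹ : ℝ) • (Acl u + (N * π u) • g x T) := by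
      simp only [ContinuousLinearMap.coe_smul', Pi.smul_apply, ContinuousLinearMap.coe_comp',
        Function.comp_apply, ContinuousLinearMap.prod_apply, ContinuousLinearMap.coe_id', id_eq,
        ContinuousLinearMap.coe_smul]
      rw [hsplit u ((N : ℝ) • π u)]
      simp [smul_eq_mul]
    rw [hval]
    have hgoal : (π.smulRight (γ x (N * π x) - ∫ u in (0 : ℝ)..1, γ x u) + R N x) u
        = π u • g x T + (N⁻¹ : ℝ) • Acl u := by
      rw [hRA]
      simp only [ContinuousLinearMap.add_apply, ContinuousLinearMap.smulRight_apply,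
        ContinuousLinearMap.coe_smul', Pi.smul_apply]
      rfl
    rw [hgoal, smul_add, smul_smul, add_comm]
    congr 2
    field_simp
  · intro K hK ε hε
    set h : E → ℝ → (E →L[ℝ] F) := fun x s ↦ fderiv ℝ (fun y ↦ γ y s) x - fderiv ℝ A x with hh
    have hcont_h : Continuous ↿h := by
      have h1 : Continuous fun p : E × ℝ ↦ fderiv ℝ (fun y ↦ γ y p.2) p.1 := my_cont_partial hγ
      have h2 : Continuous fun p : E × ℝ ↦ fderiv ℝ A p.1 := by
        have h3 : (∞ : WithTop ℕ∞) + 1 ≤ ∞ := by norm_num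
        exact ((hAs.fderiv_right h3).continuous).comp continuous_fst
      exact h1.sub h2
    have hint_h : ∀ (x : E) (a b : ℝ), IntervalIntegrable (h x) volume a b := fun x a b ↦
      (hcont_h.comp (Continuous.prodMk_right x)).intervalIntegrable a b
    have hper_h : ∀ x : E, Function.Periodic (h x) 1 := by
      intro x s
      have heq : (fun y ↦ γ y (s + 1)) = fun y ↦ γ y s := funext fun y ↦ hper y s
      simp only [hh, heq]
    have havg : ∀ x : E, (∫ u in (0:ℝ)..1, h x u) = 0 := by
      intro x
      have h1 : fderiv ℝ A x = ∫ u in (0:ℝ)..1, fderiv ℝ (fun y ↦ γ y u) x :=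
        (my_key1 hγ 0 1 x).fderiv
      have h2 : IntervalIntegrable (fun u ↦ fderiv ℝ (fun y ↦ γ y u) x) volume 0 1 :=
        ((my_cont_partial hγ).comp (Continuous.prodMk_right x)).intervalIntegrable 0 1
      simp only [hh]
      rw [intervalIntegral.integral_sub h2 intervalIntegrable_const,
        intervalIntegral.integral_const, ← h1]
      simp
    set P : E × ℝ → (E →L[ℝ] F) := fun p ↦ ∫ s in (0:ℝ)..p.2, h p.1 s with hP
    have hPcont : Continuous P :=
      intervalIntegral.continuous_parametric_primitive_of_continuous hcont_h
    have hPper : ∀ x : E, Function.Periodic (fun t ↦ P (x, t)) 1 := by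
      intro x t
      show P (x, t + 1) = P (x, t)
      have hsplitP : P (x, t + 1) = P (x, t) + ∫ s in t..(t+1), h x s := by
        simp only [hP]
        exact (intervalIntegral.integral_add_adjacent_intervals (hint_h x 0 t)
          (hint_h x t (t+1))).symm
      rw [hsplitP, (hper_h x).intervalIntegral_add_eq t 0]
      simp [havg x]
    obtain ⟨C, hC⟩ := (hK.prod isCompact_Icc).exists_bound_of_continuousOn hPcont.continuousOn
    refine ⟨max C 0 / ε + 1, fun N hN x hx ↦ ?_⟩
    have hNpos : 0 < N := lt_of_lt_of_le (by positivity) hN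
    have hPbound : ∀ t : ℝ, ‖P (x, t)‖ ≤ max C 0 := by
      intro t
      have h1 : P (x, t) = P (x, Int.fract t) := by
        have h2 := (hPper x).sub_int_mul_eq (x := t) ⌊t⌋
        rw [mul_one] at h2
        exact h2.symm
      rw [h1]
      exact le_trans (hC (x, Int.fract t)
        ⟨hx, ⟨Int.fract_nonneg t, (Int.fract_lt_one t).le⟩⟩) (le_max_left _ _)
    have hRP : R N x = (N⁻¹ : ℝ) • P (x, N * π x) := hR N x
    rw [hRP]
    have hnorm : ‖(N⁻¹ : ℝ) • P (x, N * π x)‖ = N⁻¹ * ‖P (x, N * π x)‖ := by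
      have h5 := norm_smul (N⁻¹ : ℝ) (P (x, N * π x))
      rw [Real.norm_eq_abs, abs_of_pos (inv_pos.2 hNpos)] at h5
      exact h5
    rw [hnorm]
    have hb := hPbound (N * π x)
    have hC' : max C 0 ≤ ε * N := by
      rw [← div_le_iff₀' hε]
      linarith
    calc N⁻¹ * ‖P (x, N * π x)‖ ≤ N⁻¹ * (ε * N) :=
          mul_le_mul_of_nonneg_left (hb.trans hC') (by positivity)
      _ = ε := by field_simp
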